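/- Adding a point preserves the interpolation identity: let 0 < a ≤ ℓ/2, let x ∈ S, and let ζ be a configuration with atoms at x-a, x, x+a such that g(x,ζ) := ∑_{y ∈ ζ} (a - d(x,y))₊ · length(Γ_ζ(y)) = a². Then for any point z ∈ S, the configuration ζ' = ζ + δ_z also satisfies g(x,ζ') = a². -/

import Mathlib

open Finset MeasureTheory

/-- The (open) Voronoi cell of `y` with respect to the finite set of sites `F` on the circle. -/
def voronoi (ℓ : ℝ) (F : Finset (AddCircle ℓ)) (y : AddCircle ℓ) : Set (AddCircle ℓ) :=
  {z | ∀ y' ∈ F, y' ≠ y → dist z y < dist z y'}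

/-- The interpolation functional `g(x,ζ) = ∑_y (a - d(x,y))₊ · length(Γ_ζ(y))`. -/
noncomputable def g (ℓ : ℝ) [Fact (0 < ℓ)] (a : ℝ) (x : AddCircle ℓ)
    (ζ : AddCircle ℓ →₀ ℕ) : ℝ :=
  ∑ y ∈ ζ.support, max (a - dist x y) 0 * (volume (voronoi ℓ ζ.support y)).toReal

section Helpers
open Set AddCircle
set_option linter.unusedSectionVars false
set_option maxHeartbeats 1000000

variable {ℓ : ℝ} [hℓ : Fact (0 < ℓ)]

noncomputable def rp (ℓ : ℝ) [Fact (0 < ℓ)] (t : AddCircle ℓ) : ℝ :=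
  (equivIoc ℓ (-(ℓ/2)) t : ℝ)

lemma rp_mem (t : AddCircle ℓ) : rp ℓ t ∈ Ioc (-(ℓ/2)) (ℓ/2) := by
  have h := (equivIoc ℓ (-(ℓ/2)) t).2
  unfold rp
  exact ⟨h.1, by linarith [h.2]⟩

lemma coe_rp (t : AddCircle ℓ) : ((rp ℓ t : ℝ) : AddCircle ℓ) = t := by
  have : ((equivIoc ℓ (-(ℓ/2))).symm (equivIoc ℓ (-(ℓ/2)) t)) = t := Equiv.symm_apply_apply _ _
  exact this

lemma rp_coe {s : ℝ} (hs : s ∈ Ioc (-(ℓ/2)) (ℓ/2)) : rp ℓ (s : AddCircle ℓ) = s := by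
  have hs' : s ∈ Ioc (-(ℓ/2)) (-(ℓ/2) + ℓ) := by
    rcases hs with ⟨h1, h2⟩; exact ⟨h1, by linarith⟩
  have : (equivIoc ℓ (-(ℓ/2))) ((s : AddCircle ℓ)) = ⟨s, hs'⟩ := by
    rw [Equiv.apply_eq_iff_eq_symm_apply]; rfl
  simp [rp, this]

lemma measurable_rp : Measurable (rp ℓ) := by
  have : rp ℓ = fun t => ((measurableEquivIoc ℓ (-(ℓ/2)) t : Ioc (-(ℓ/2)) (-(ℓ/2)+ℓ)) : ℝ) := rfl
  rw [this]
  exact measurable_subtype_coe.comp (measurableEquivIoc ℓ (-(ℓ/2))).measurable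

lemma vol_rp_preimage {A : Set ℝ} (hA : MeasurableSet A) :
    volume (rp ℓ ⁻¹' A) = volume (A ∩ Ioc (-(ℓ/2)) (ℓ/2)) := by
  have hmeas : MeasurableSet (rp ℓ ⁻¹' A) := measurable_rp hA
  rw [AddCircle.add_projection_respects_measure ℓ (-(ℓ/2)) hmeas]
  congr 1
  ext s
  simp only [mem_inter_iff, Set.mem_preimage]
  constructor
  · rintro ⟨h1, h2⟩
    have h2' : s ∈ Ioc (-(ℓ/2)) (ℓ/2) := ⟨h2.1, by linarith [h2.2]⟩
    have h1' : rp ℓ ((s : ℝ) : AddCircle ℓ) ∈ A := h1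
    rw [rp_coe h2'] at h1'
    exact ⟨h1', h2'⟩
  · rintro ⟨h1, h2⟩
    refine ⟨?_, ⟨h2.1, by linarith [h2.2]⟩⟩
    show rp ℓ ((s : ℝ) : AddCircle ℓ) ∈ A
    rw [rp_coe h2]
    exact h1

lemma vol_singleton' (t : AddCircle ℓ) : volume ({t} : Set (AddCircle ℓ)) = 0 := by
  have h : ({t} : Set (AddCircle ℓ)) = rp ℓ ⁻¹' {rp ℓ t} := by
    ext s
    simp only [Set.mem_preimage, mem_singleton_iff]
    constructor
    · rintro rfl; rfl
    · intro h
      have := congrArg (fun w : ℝ => (w : AddCircle ℓ)) h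
      simpa [coe_rp] using this
  rw [h, vol_rp_preimage (measurableSet_singleton _)]
  exact measure_mono_null inter_subset_left Real.volume_singleton

lemma vol_rp_Ioo {α β : ℝ} (h1 : -(ℓ/2) ≤ α) (h2 : β ≤ ℓ/2) :
    volume (rp ℓ ⁻¹' Ioo α β) = ENNReal.ofReal (β - α) := by
  rw [vol_rp_preimage measurableSet_Ioo]
  have : Ioo α β ∩ Ioc (-(ℓ/2)) (ℓ/2) = Ioo α β :=
    inter_eq_left.2 fun s hs => ⟨lt_of_le_of_lt h1 hs.1, le_of_lt (lt_of_lt_of_le hs.2 h2)⟩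
  rw [this, Real.volume_Ioo]

lemma vol_sub_preimage (z : AddCircle ℓ) (A : Set (AddCircle ℓ)) :
    volume ((fun t => t - z) ⁻¹' A) = volume A := by
  have h : (fun t : AddCircle ℓ => t - z) = fun t => (-z) + t := by
    funext t; rw [sub_eq_neg_add]
  rw [h, measure_preimage_add]

lemma norm_coe_eq_abs {w : ℝ} (hw : |w| ≤ ℓ/2) : ‖(w : AddCircle ℓ)‖ = |w| :=
  (norm_coe_eq_abs_iff ℓ hℓ.out.ne').2 (by rwa [abs_of_pos hℓ.out])

lemma norm_coe_le_abs (w : ℝ) : ‖(w : AddCircle ℓ)‖ ≤ |w| := by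
  rcases le_or_gt (|w|) (ℓ/2) with h1 | h1
  · rw [norm_coe_eq_abs h1]
  · calc ‖(w : AddCircle ℓ)‖ ≤ |ℓ|/2 := norm_le_half_period ℓ hℓ.out.ne'
      _ ≤ |w| := by rw [abs_of_pos hℓ.out]; linarith

lemma norm_coe_min {w : ℝ} (hw : |w| ≤ ℓ) :
    ‖(w : AddCircle ℓ)‖ = min |w| (ℓ - |w|) := by
  have hp := hℓ.out
  rcases le_or_gt (|w|) (ℓ/2) with h1 | h1
  · rw [norm_coe_eq_abs h1, min_eq_left (by linarith)]
  · rcases abs_cases w with ⟨he, h2⟩ | ⟨he, h2⟩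
    · have hc : ((w - ℓ : ℝ) : AddCircle ℓ) = (w : AddCircle ℓ) := by simp
      rw [← hc, norm_coe_eq_abs (by rw [abs_le]; constructor <;> linarith),
        abs_of_nonpos (by linarith), he, min_eq_right (by linarith)]
      ring
    · have hc : ((w + ℓ : ℝ) : AddCircle ℓ) = (w : AddCircle ℓ) := by simp
      rw [← hc, norm_coe_eq_abs (by rw [abs_le]; constructor <;> linarith),
        abs_of_nonneg (by linarith), he, min_eq_right (by linarith)]
      ring

lemma norm_rp (t : AddCircle ℓ) : ‖t‖ = |rp ℓ t| := by
  conv_lhs => rw [← coe_rp t]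
  refine norm_coe_eq_abs ?_
  have h := rp_mem t
  rw [abs_le]; exact ⟨by linarith [h.1], h.2⟩

lemma coe_sub' (α β : ℝ) :
    ((α - β : ℝ) : AddCircle ℓ) = ((α : ℝ) : AddCircle ℓ) - ((β : ℝ) : AddCircle ℓ) := by
  rw [sub_eq_add_neg, AddCircle.coe_add, AddCircle.coe_neg, sub_eq_add_neg]

lemma norm_coe_neg' (α : ℝ) : ‖((-α : ℝ) : AddCircle ℓ)‖ = ‖((α : ℝ) : AddCircle ℓ)‖ := by
  rw [AddCircle.coe_neg, norm_neg]

lemma dist_rp' (z p q : AddCircle ℓ) :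
    dist p q = ‖((rp ℓ (p - z) - rp ℓ (q - z) : ℝ) : AddCircle ℓ)‖ := by
  rw [dist_eq_norm, coe_sub', coe_rp, coe_rp]
  congr 1
  abel

lemma dist_base' (z p : AddCircle ℓ) : dist p z = |rp ℓ (p - z)| := by
  rw [dist_eq_norm, norm_rp]

lemma rp_inj {z y y' : AddCircle ℓ} (h : rp ℓ (y - z) = rp ℓ (y' - z)) : y = y' := by
  have h2 := congrArg (fun w : ℝ => (w : AddCircle ℓ)) h
  simp only [coe_rp] at h2
  exact sub_left_inj.1 h2

lemma vol_tie {y y' : AddCircle ℓ} (h : y ≠ y') :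
    volume {t : AddCircle ℓ | dist t y = dist t y'} = 0 := by
  set c : AddCircle ℓ := ((rp ℓ (y + y') / 2 : ℝ) : AddCircle ℓ) with hc
  have hcc : c + c = y + y' := by
    rw [hc, ← AddCircle.coe_add, show rp ℓ (y + y') / 2 + rp ℓ (y + y') / 2 = rp ℓ (y + y') by ring,
      coe_rp]
  have hsub : {t : AddCircle ℓ | dist t y = dist t y'} ⊆ {c, c + ((ℓ/2 : ℝ) : AddCircle ℓ)} := by
    intro t ht
    simp only [mem_setOf_eq] at ht
    rw [dist_eq_norm, dist_eq_norm, norm_rp, norm_rp] at ht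
    rcases abs_eq_abs.1 ht with h1 | h1
    · exfalso
      apply h
      have h2 := congrArg (fun w : ℝ => (w : AddCircle ℓ)) h1
      simp only [coe_rp] at h2
      exact sub_right_inj.1 h2
    · have h2 := congrArg (fun w : ℝ => (w : AddCircle ℓ)) h1
      simp only [AddCircle.coe_neg, coe_rp] at h2
      have h3 : t + t = y + y' := by
        rw [neg_sub] at h2
        have h4 : (t - y) + (y + t) = (y' - t) + (y + t) := by rw [h2]
        calc t + t = (t - y) + (y + t) := by abel
          _ = (y' - t) + (y + t) := h4
          _ = y + y' := by abel
      set s := t - c with hs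
      have hss : s + s = 0 := by
        have : s + s = (t + t) - (c + c) := by rw [hs]; abel
        rw [this, h3, hcc, sub_self]
      set σ := rp ℓ s with hσ
      have hmkσ : ((σ : ℝ) : AddCircle ℓ) = s := coe_rp s
      have h0 : ((σ + σ : ℝ) : AddCircle ℓ) = 0 := by
        rw [AddCircle.coe_add, hmkσ, hss]
      obtain ⟨n, hn⟩ := (AddCircle.coe_eq_zero_iff _).1 h0
      have hr : (n : ℝ) * ℓ = σ + σ := by
        rw [← hn]; push_cast [zsmul_eq_mul]; ring
      have hσm := rp_mem s
      have hp := hℓ.out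
      have hn0 : n = 0 ∨ n = 1 := by
        have hlo : -1 < (n : ℝ) := by nlinarith [hσm.1, hσm.2]
        have hhi : (n : ℝ) ≤ 1 := by nlinarith [hσm.1, hσm.2]
        have h5 : (-1 : ℤ) < n := by exact_mod_cast hlo
        have h6 : n ≤ 1 := by exact_mod_cast hhi
        omega
      rcases hn0 with rfl | rfl
      · left
        have hσ0 : σ = 0 := by push_cast at hr; linarith
        have hs0 : s = 0 := by rw [← hmkσ, hσ0]; norm_cast
        exact sub_eq_zero.1 hs0
      · right
        have hσ0 : σ = ℓ/2 := by push_cast at hr; linarith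
        have hs2 : s = ((ℓ/2 : ℝ) : AddCircle ℓ) := by rw [← hmkσ, hσ0]
        rw [show t = c + s by rw [hs]; abel, hs2]
        exact rfl
  refine measure_mono_null hsub ?_
  rw [Set.insert_eq]
  exact measure_union_null (vol_singleton' _) (vol_singleton' _)

lemma measurableSet_voronoi (F : Finset (AddCircle ℓ)) (y : AddCircle ℓ) :
    MeasurableSet (voronoi ℓ F y) := by
  have h : voronoi ℓ F y
      = ⋂ y' ∈ (F : Set (AddCircle ℓ)), {t | y' ≠ y → dist t y < dist t y'} := by
    ext t
    simp only [voronoi, Set.mem_setOf_eq, Set.mem_iInter, Finset.mem_coe]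
  rw [h]
  refine MeasurableSet.biInter (F : Set (AddCircle ℓ)).to_countable fun y' _ => ?_
  by_cases hy : y' = y
  · simp [hy]
  · have h2 : {t : AddCircle ℓ | y' ≠ y → dist t y < dist t y'} = {t | dist t y < dist t y'} := by
      ext t; simp [hy]
    rw [h2]
    exact (isOpen_lt (continuous_id.dist continuous_const)
      (continuous_id.dist continuous_const)).measurableSet

lemma voronoi_insert (F : Finset (AddCircle ℓ)) {y z : AddCircle ℓ} (hyz : y ≠ z) :
    voronoi ℓ (insert z F) y = voronoi ℓ F y ∩ {t | dist t y < dist t z} := by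
  ext t
  simp only [voronoi, Set.mem_setOf_eq, Set.mem_inter_iff, Finset.mem_insert]
  constructor
  · intro h
    exact ⟨fun y' hy' hne => h y' (Or.inr hy') hne, h z (Or.inl rfl) (Ne.symm hyz)⟩
  · rintro ⟨h1, h2⟩ y' hy' hne
    rcases hy' with rfl | hy'
    · exact h2
    · exact h1 y' hy' hne

lemma vol_split {S : Set (AddCircle ℓ)} (hS : MeasurableSet S) {y z : AddCircle ℓ} (hyz : y ≠ z) :
    volume S = volume (S ∩ {t | dist t y < dist t z})
      + volume (S ∩ {t | dist t z < dist t y}) := by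
  have hB : MeasurableSet (S ∩ {t : AddCircle ℓ | dist t z < dist t y}) :=
    hS.inter (isOpen_lt (continuous_id.dist continuous_const)
      (continuous_id.dist continuous_const)).measurableSet
  refine le_antisymm ?_ ?_
  · have hsub : S ⊆ (S ∩ {t | dist t y < dist t z}) ∪ (S ∩ {t | dist t z < dist t y})
        ∪ {t | dist t y = dist t z} := by
      intro t ht
      rcases lt_trichotomy (dist t y) (dist t z) with h | h | h
      · exact Or.inl (Or.inl ⟨ht, h⟩)
      · exact Or.inr h
      · exact Or.inl (Or.inr ⟨ht, h⟩)
    calc volume S ≤ volume ((S ∩ {t | dist t y < dist t z})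
          ∪ (S ∩ {t | dist t z < dist t y}) ∪ {t | dist t y = dist t z}) := measure_mono hsub
      _ ≤ volume ((S ∩ {t | dist t y < dist t z}) ∪ (S ∩ {t | dist t z < dist t y}))
          + volume {t : AddCircle ℓ | dist t y = dist t z} := measure_union_le _ _
      _ = volume ((S ∩ {t | dist t y < dist t z}) ∪ (S ∩ {t | dist t z < dist t y})) := by
          rw [vol_tie hyz, add_zero]
      _ ≤ _ := measure_union_le _ _
  · have hdisj : Disjoint (S ∩ {t : AddCircle ℓ | dist t y < dist t z})
        (S ∩ {t : AddCircle ℓ | dist t z < dist t y}) := by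
      refine Set.disjoint_left.2 ?_
      rintro t ⟨_, (h1 : dist t y < dist t z)⟩ ⟨_, (h2 : dist t z < dist t y)⟩
      exact lt_asymm h1 h2
    rw [← measure_union hdisj hB]
    exact measure_mono (by intro t ht; rcases ht with ⟨h, _⟩ | ⟨h, _⟩ <;> exact h)

lemma vol_arc (z : AddCircle ℓ) {α β : ℝ} (h1 : -(ℓ/2) ≤ α) (h2 : β ≤ ℓ/2) :
    volume {t : AddCircle ℓ | rp ℓ (t - z) ∈ Ioo α β} = ENNReal.ofReal (β - α) := by
  have h : {t : AddCircle ℓ | rp ℓ (t - z) ∈ Ioo α β}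
      = (fun t => t - z) ⁻¹' (rp ℓ ⁻¹' Ioo α β) := rfl
  rw [h, vol_sub_preimage, vol_rp_Ioo h1 h2]

lemma coreA {a cy cz τ : ℝ} (ha : 0 < a) (haℓ : a ≤ ℓ/2)
    (hcy : |cy| < a) (hcz1 : a ≤ cz) (hcz2 : cz ≤ ℓ/2) (hτ : |τ| ≤ ℓ/2)
    (h2 : ‖((τ - cy : ℝ) : AddCircle ℓ)‖ < ‖((τ - a : ℝ) : AddCircle ℓ)‖)
    (h3 : ‖((τ - cy : ℝ) : AddCircle ℓ)‖ < ‖((τ + a : ℝ) : AddCircle ℓ)‖)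
    (h4 : ‖((τ - cz : ℝ) : AddCircle ℓ)‖ ≤ ‖((τ - cy : ℝ) : AddCircle ℓ)‖) : False := by
  have hp := hℓ.out
  have hcy' := abs_lt.1 hcy
  have hτ' := abs_le.1 hτ
  have hwa : |τ - a| ≤ ℓ := by rw [abs_le]; constructor <;> linarith
  have hwb : |τ + a| ≤ ℓ := by rw [abs_le]; constructor <;> linarith
  have hwy : |τ - cy| ≤ ℓ := by rw [abs_le]; constructor <;> linarith
  have hwz : |τ - cz| ≤ ℓ := by rw [abs_le]; constructor <;> linarith
  rw [norm_coe_min hwy] at h2 h3 h4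
  rw [norm_coe_min hwa] at h2
  rw [norm_coe_min hwb] at h3
  rw [norm_coe_min hwz] at h4
  have e2a : min |τ - cy| (ℓ - |τ - cy|) < |τ - a| := lt_of_lt_of_le h2 (min_le_left _ _)
  have e2b : min |τ - cy| (ℓ - |τ - cy|) < ℓ - |τ - a| := lt_of_lt_of_le h2 (min_le_right _ _)
  have e3a : min |τ - cy| (ℓ - |τ - cy|) < |τ + a| := lt_of_lt_of_le h3 (min_le_left _ _)
  have e3b : min |τ - cy| (ℓ - |τ - cy|) < ℓ - |τ + a| := lt_of_lt_of_le h3 (min_le_right _ _)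
  rcases min_cases (|τ - cy|) (ℓ - |τ - cy|) with ⟨hm1, hm2⟩ | ⟨hm1, hm2⟩ <;>
  rcases min_cases (|τ - cz|) (ℓ - |τ - cz|) with ⟨hn1, hn2⟩ | ⟨hn1, hn2⟩ <;>
  rw [hm1] at e2a e2b e3a e3b h4 <;> rw [hn1] at h4 <;>
  rcases abs_cases (τ - a) with ⟨q1, q1'⟩ | ⟨q1, q1'⟩ <;>
  rcases abs_cases (τ + a) with ⟨q2, q2'⟩ | ⟨q2, q2'⟩ <;>
  rcases abs_cases (τ - cy) with ⟨q3, q3'⟩ | ⟨q3, q3'⟩ <;>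
  rcases abs_cases (τ - cz) with ⟨q4, q4'⟩ | ⟨q4, q4'⟩ <;>
    linarith

lemma caseA_eq {a : ℝ} (ha : 0 < a) (haℓ : a ≤ ℓ/2) {x z : AddCircle ℓ}
    {F : Finset (AddCircle ℓ)} (hxl : x - ((a : ℝ) : AddCircle ℓ) ∈ F)
    (hxr : x + ((a : ℝ) : AddCircle ℓ) ∈ F)
    (hdxz : a ≤ dist x z) {y : AddCircle ℓ} (hy : dist x y < a) :
    voronoi ℓ (insert z F) y = voronoi ℓ F y := by
  have hp := hℓ.out
  apply subset_antisymm
  · intro t ht y' hy' hne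
    exact ht y' (Finset.mem_insert_of_mem hy') hne
  · intro t ht y' hy' hne
    rcases Finset.mem_insert.1 hy' with rfl | hy'F
    swap
    · exact ht y' hy'F hne
    by_contra hcon
    push_neg at hcon
    have hane : dist x (x + ((a : ℝ) : AddCircle ℓ)) = a := by
      rw [dist_eq_norm, show x - (x + ((a:ℝ) : AddCircle ℓ)) = ((-a : ℝ) : AddCircle ℓ) by
        rw [AddCircle.coe_neg]; abel, norm_coe_neg', norm_coe_eq_abs (by
          rw [abs_of_pos ha]; linarith), abs_of_pos ha]
    have hane2 : dist x (x - ((a : ℝ) : AddCircle ℓ)) = a := by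
      rw [dist_eq_norm, show x - (x - ((a:ℝ) : AddCircle ℓ)) = ((a : ℝ) : AddCircle ℓ) by abel,
        norm_coe_eq_abs (by rw [abs_of_pos ha]; linarith), abs_of_pos ha]
    have hyne1 : (x + ((a : ℝ) : AddCircle ℓ)) ≠ y := by
      intro h; rw [← h] at hy; rw [hane] at hy; exact lt_irrefl _ hy
    have hyne2 : (x - ((a : ℝ) : AddCircle ℓ)) ≠ y := by
      intro h; rw [← h] at hy; rw [hane2] at hy; exact lt_irrefl _ hy
    have h2 := ht _ hxr hyne1
    have h3 := ht _ hxl hyne2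
    set τ := rp ℓ (t - x) with hτdef
    set cy := rp ℓ (y - x) with hcydef
    set cz := rp ℓ (y' - x) with hczdef
    have hτm := rp_mem (t - x)
    have hcym := rp_mem (y - x)
    have hczm := rp_mem (y' - x)
    have hdty : dist t y = ‖((τ - cy : ℝ) : AddCircle ℓ)‖ := dist_rp' x t y
    have hdtz : dist t y' = ‖((τ - cz : ℝ) : AddCircle ℓ)‖ := dist_rp' x t y'
    have hdtp : dist t (x + ((a : ℝ) : AddCircle ℓ)) = ‖((τ - a : ℝ) : AddCircle ℓ)‖ := by
      rw [dist_eq_norm, coe_sub', coe_rp]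
      congr 1
      abel
    have hdtm : dist t (x - ((a : ℝ) : AddCircle ℓ)) = ‖((τ + a : ℝ) : AddCircle ℓ)‖ := by
      rw [dist_eq_norm, show ((τ + a : ℝ) : AddCircle ℓ)
        = ((τ : ℝ) : AddCircle ℓ) + ((a : ℝ) : AddCircle ℓ) from by
          rw [AddCircle.coe_add], coe_rp]
      congr 1
      abel
    have hcy' : |cy| < a := by
      rw [dist_comm, dist_base' x y] at hy; exact hy
    have hcz' : a ≤ |cz| := by
      rw [dist_comm, dist_base' x y'] at hdxz; exact hdxz
    have hτ' : |τ| ≤ ℓ/2 := abs_le.2 ⟨by linarith [hτm.1], hτm.2⟩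
    rw [hdty, hdtp] at h2
    rw [hdty, hdtm] at h3
    rw [hdtz, hdty] at hcon
    rcases le_or_gt 0 cz with hsgn | hsgn
    · exact coreA ha haℓ hcy' (by rw [abs_of_nonneg hsgn] at hcz'; exact hcz') hczm.2 hτ' h2 h3 hcon
    · refine coreA (a := a) (cy := -cy) (cz := -cz) (τ := -τ) ha haℓ
        (by rwa [abs_neg]) ?_ ?_ (by rwa [abs_neg]) ?_ ?_ ?_
      · rw [abs_of_neg hsgn] at hcz'; exact hcz'
      · linarith [hczm.1]
      · rw [show (-τ - -cy : ℝ) = -(τ - cy) by ring, show (-τ - a : ℝ) = -(τ + a) by ring,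
          norm_coe_neg', norm_coe_neg']
        exact h3
      · rw [show (-τ - -cy : ℝ) = -(τ - cy) by ring, show (-τ + a : ℝ) = -(τ - a) by ring,
          norm_coe_neg', norm_coe_neg']
        exact h2
      · rw [show (-τ - -cy : ℝ) = -(τ - cy) by ring, show (-τ - -cz : ℝ) = -(τ - cz) by ring,
          norm_coe_neg', norm_coe_neg']
        exact hcon

section CaseB
variable {a : ℝ} {z : AddCircle ℓ} {F : Finset (AddCircle ℓ)} {y₁ y₂ : AddCircle ℓ} {u v : ℝ}

lemma cellz (ha : 0 < a) (haℓ : a ≤ ℓ/2) (hzF : z ∉ F)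
    (h1F : y₁ ∈ F) (h2F : y₂ ∈ F)
    (hu : rp ℓ (y₁ - z) = u) (hv : rp ℓ (y₂ - z) = v)
    (hu0 : u < 0) (hv0 : 0 < v) (hua : -a < u) (hva : v < a)
    (hgap : ∀ y ∈ F, rp ℓ (y - z) ≤ u ∨ v ≤ rp ℓ (y - z)) :
    voronoi ℓ (insert z F) z = {t | rp ℓ (t - z) ∈ Ioo (u/2) (v/2)} := by
  have hp := hℓ.out
  ext t
  set τ := rp ℓ (t - z) with hτdef
  have hτm := rp_mem (t - z)
  constructor
  · intro h
    have hy1z : y₁ ≠ z := fun he => hzF (he ▸ h1F)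
    have hy2z : y₂ ≠ z := fun he => hzF (he ▸ h2F)
    have hA : dist t z < dist t y₂ := h y₂ (Finset.mem_insert_of_mem h2F) hy2z
    have hB : dist t z < dist t y₁ := h y₁ (Finset.mem_insert_of_mem h1F) hy1z
    rw [dist_base' z t, dist_rp' z t y₂, hv, ← hτdef] at hA
    rw [dist_base' z t, dist_rp' z t y₁, hu, ← hτdef] at hB
    have hA' := lt_of_lt_of_le hA (norm_coe_le_abs _)
    have hB' := lt_of_lt_of_le hB (norm_coe_le_abs _)
    constructor
    · rcases abs_cases τ with ⟨e, _⟩ | ⟨e, _⟩ <;> rcases abs_cases (τ - u) with ⟨e', _⟩ | ⟨e', _⟩ <;>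
        rw [e, e'] at hB' <;> linarith
    · rcases abs_cases τ with ⟨e, _⟩ | ⟨e, _⟩ <;> rcases abs_cases (τ - v) with ⟨e', _⟩ | ⟨e', _⟩ <;>
        rw [e, e'] at hA' <;> linarith
  · rintro ⟨ht1, ht2⟩ y' hy' hne
    rcases Finset.mem_insert.1 hy' with rfl | hy'F
    · exact absurd rfl hne
    set r := rp ℓ (y' - z) with hrdef
    have hrm := rp_mem (y' - z)
    have hbound : |τ - r| ≤ ℓ := by
      rw [abs_le]; constructor <;> [linarith [hτm.1, hτm.2, hrm.1, hrm.2];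
        linarith [hτm.1, hτm.2, hrm.1, hrm.2]]
    rw [dist_base' z t, dist_rp' z t y', ← hrdef, ← hτdef, norm_coe_min hbound]
    refine lt_min ?_ ?_ <;>
      rcases hgap y' hy'F with hg | hg <;> rw [← hrdef] at hg <;>
      rcases abs_cases τ with ⟨e, e2⟩ | ⟨e, e2⟩ <;>
      rcases abs_cases (τ - r) with ⟨e', e2'⟩ | ⟨e', e2'⟩ <;>
      rw [e, e'] <;> linarith [hrm.1, hrm.2, hτm.1, hτm.2]

lemma cellB1 (ha : 0 < a) (haℓ : a ≤ ℓ/2) (hzF : z ∉ F)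
    (h1F : y₁ ∈ F) (h2F : y₂ ∈ F)
    (hu : rp ℓ (y₁ - z) = u) (hv : rp ℓ (y₂ - z) = v)
    (hu0 : u < 0) (hv0 : 0 < v) (hua : -a < u) (hva : v < a)
    (hgap : ∀ y ∈ F, rp ℓ (y - z) ≤ u ∨ v ≤ rp ℓ (y - z)) :
    voronoi ℓ F y₁ ∩ voronoi ℓ (insert z F) z
      = {t | rp ℓ (t - z) ∈ Ioo (u/2) ((u+v)/2)} := by
  have hp := hℓ.out
  rw [cellz ha haℓ hzF h1F h2F hu hv hu0 hv0 hua hva hgap]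
  have hne12 : y₂ ≠ y₁ := fun he => by
    rw [he, hu] at hv; linarith
  ext t
  set τ := rp ℓ (t - z) with hτdef
  have hτm := rp_mem (t - z)
  simp only [Set.mem_inter_iff, Set.mem_setOf_eq, Set.mem_Ioo]
  constructor
  · rintro ⟨hV, hτ1, hτ2⟩
    refine ⟨hτ1, ?_⟩
    by_contra hcon
    push_neg at hcon
    have hlt := hV y₂ h2F hne12
    rw [dist_rp' z t y₂, dist_rp' z t y₁, hu, hv, ← hτdef] at hlt
    have hup := lt_of_lt_of_le hlt (norm_coe_le_abs _)
    have hbound : |τ - u| ≤ ℓ := by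
      rw [abs_le]; constructor <;> linarith [hτm.1, hτm.2]
    rw [norm_coe_min hbound] at hup
    rcases min_cases (|τ - u|) (ℓ - |τ - u|) with ⟨e, _⟩ | ⟨e, _⟩ <;> rw [e] at hup <;>
      rcases abs_cases (τ - u) with ⟨e', _⟩ | ⟨e', _⟩ <;> rw [e'] at hup <;>
      rcases abs_cases (τ - v) with ⟨e'', _⟩ | ⟨e'', _⟩ <;> rw [e''] at hup <;> linarith
  · rintro ⟨hτ1, hτ2⟩
    refine ⟨?_, hτ1, by linarith⟩
    intro y hy hne
    set r := rp ℓ (y - z) with hrdef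
    have hrm := rp_mem (y - z)
    have hry : r ≠ u := fun he => hne (rp_inj (by rw [← hrdef, he, ← hu]))
    have hbound : |τ - r| ≤ ℓ := by
      rw [abs_le]; constructor <;> linarith [hτm.1, hτm.2, hrm.1, hrm.2]
    rw [dist_rp' z t y₁, dist_rp' z t y, hu, ← hτdef, ← hrdef, norm_coe_min hbound]
    calc ‖((τ - u : ℝ) : AddCircle ℓ)‖ ≤ |τ - u| := norm_coe_le_abs _
      _ < min (|τ - r|) (ℓ - |τ - r|) := by
        have hg : r < u ∨ v ≤ r := by
          rcases hgap y hy with h | h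
          · rw [← hrdef] at h; exact Or.inl (lt_of_le_of_ne h hry)
          · rw [← hrdef] at h; exact Or.inr h
        refine lt_min ?_ ?_ <;>
          rcases hg with hg | hg <;>
          rcases abs_cases (τ - u) with ⟨e, e2⟩ | ⟨e, e2⟩ <;>
          rcases abs_cases (τ - r) with ⟨e', e2'⟩ | ⟨e', e2'⟩ <;>
          rw [e, e'] <;>
          linarith [hrm.1, hrm.2, hτm.1, hτm.2]

lemma cellB2 (ha : 0 < a) (haℓ : a ≤ ℓ/2) (hzF : z ∉ F)
    (h1F : y₁ ∈ F) (h2F : y₂ ∈ F)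
    (hu : rp ℓ (y₁ - z) = u) (hv : rp ℓ (y₂ - z) = v)
    (hu0 : u < 0) (hv0 : 0 < v) (hua : -a < u) (hva : v < a)
    (hgap : ∀ y ∈ F, rp ℓ (y - z) ≤ u ∨ v ≤ rp ℓ (y - z)) :
    voronoi ℓ F y₂ ∩ voronoi ℓ (insert z F) z
      = {t | rp ℓ (t - z) ∈ Ioo ((u+v)/2) (v/2)} := by
  have hp := hℓ.out
  rw [cellz ha haℓ hzF h1F h2F hu hv hu0 hv0 hua hva hgap]
  have hne12 : y₁ ≠ y₂ := fun he => by
    rw [he, hv] at hu; linarith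
  ext t
  set τ := rp ℓ (t - z) with hτdef
  have hτm := rp_mem (t - z)
  simp only [Set.mem_inter_iff, Set.mem_setOf_eq, Set.mem_Ioo]
  constructor
  · rintro ⟨hV, hτ1, hτ2⟩
    refine ⟨?_, hτ2⟩
    by_contra hcon
    push_neg at hcon
    have hlt := hV y₁ h1F hne12
    rw [dist_rp' z t y₁, dist_rp' z t y₂, hu, hv, ← hτdef] at hlt
    have hup := lt_of_lt_of_le hlt (norm_coe_le_abs _)
    have hbound : |τ - v| ≤ ℓ := by
      rw [abs_le]; constructor <;> linarith [hτm.1, hτm.2]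
    rw [norm_coe_min hbound] at hup
    rcases min_cases (|τ - v|) (ℓ - |τ - v|) with ⟨e, _⟩ | ⟨e, _⟩ <;> rw [e] at hup <;>
      rcases abs_cases (τ - v) with ⟨e', _⟩ | ⟨e', _⟩ <;> rw [e'] at hup <;>
      rcases abs_cases (τ - u) with ⟨e'', _⟩ | ⟨e'', _⟩ <;> rw [e''] at hup <;> linarith
  · rintro ⟨hτ1, hτ2⟩
    refine ⟨?_, by linarith, hτ2⟩
    intro y hy hne
    set r := rp ℓ (y - z) with hrdef
    have hrm := rp_mem (y - z)
    have hry : r ≠ v := fun he => hne (rp_inj (by rw [← hrdef, he, ← hv]))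
    have hbound : |τ - r| ≤ ℓ := by
      rw [abs_le]; constructor <;> linarith [hτm.1, hτm.2, hrm.1, hrm.2]
    rw [dist_rp' z t y₂, dist_rp' z t y, hv, ← hτdef, ← hrdef, norm_coe_min hbound]
    calc ‖((τ - v : ℝ) : AddCircle ℓ)‖ ≤ |τ - v| := norm_coe_le_abs _
      _ < min (|τ - r|) (ℓ - |τ - r|) := by
        have hg : r ≤ u ∨ v < r := by
          rcases hgap y hy with h | h
          · rw [← hrdef] at h; exact Or.inl h
          · rw [← hrdef] at h; exact Or.inr (lt_of_le_of_ne h (fun he => hry he.symm))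
        refine lt_min ?_ ?_ <;>
          rcases hg with hg | hg <;>
          rcases abs_cases (τ - v) with ⟨e, e2⟩ | ⟨e, e2⟩ <;>
          rcases abs_cases (τ - r) with ⟨e', e2'⟩ | ⟨e', e2'⟩ <;>
          rw [e, e'] <;>
          linarith [hrm.1, hrm.2, hτm.1, hτm.2]

lemma cellE4 (ha : 0 < a) (haℓ : a ≤ ℓ/2) (hzF : z ∉ F)
    (h1F : y₁ ∈ F) (h2F : y₂ ∈ F)
    (hu : rp ℓ (y₁ - z) = u) (hv : rp ℓ (y₂ - z) = v)
    (hu0 : u < 0) (hv0 : 0 < v) (hua : -a < u) (hva : v < a)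
    (hgap : ∀ y ∈ F, rp ℓ (y - z) ≤ u ∨ v ≤ rp ℓ (y - z))
    {y : AddCircle ℓ} (hyF : y ∈ F) (hne1 : y ≠ y₁) (hne2 : y ≠ y₂) :
    voronoi ℓ (insert z F) y = voronoi ℓ F y := by
  have hp := hℓ.out
  apply subset_antisymm
  · intro t ht y' hy' hne
    exact ht y' (Finset.mem_insert_of_mem hy') hne
  · intro t ht y' hy' hne
    rcases Finset.mem_insert.1 hy' with he | hy'F
    swap
    · exact ht y' hy'F hne
    subst he
    by_contra hcon
    push_neg at hcon
    set τ := rp ℓ (t - y') with hτdef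
    have hτm := rp_mem (t - y')
    set r := rp ℓ (y - y') with hrdef
    have hrm := rp_mem (y - y')
    have hlt1 : dist t y < dist t y₁ := ht y₁ h1F (fun he => hne1 he.symm)
    have hlt2 : dist t y < dist t y₂ := ht y₂ h2F (fun he => hne2 he.symm)
    have hry1 : r ≠ u := fun he => hne1 (rp_inj (by rw [← hrdef, he, ← hu]))
    have hry2 : r ≠ v := fun he => hne2 (rp_inj (by rw [← hrdef, he, ← hv]))
    have hg : r < u ∨ v < r := by
      rcases hgap y hyF with h | h
      · rw [← hrdef] at h; exact Or.inl (lt_of_le_of_ne h hry1)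
      · rw [← hrdef] at h; exact Or.inr (lt_of_le_of_ne h (fun he => hry2 he.symm))
    have hdy : dist t y = ‖((τ - r : ℝ) : AddCircle ℓ)‖ := by
      rw [dist_rp' y' t y, ← hrdef, ← hτdef]
    have hdy1 : dist t y₁ = ‖((τ - u : ℝ) : AddCircle ℓ)‖ := by
      rw [dist_rp' y' t y₁, hu, ← hτdef]
    have hdy2 : dist t y₂ = ‖((τ - v : ℝ) : AddCircle ℓ)‖ := by
      rw [dist_rp' y' t y₂, hv, ← hτdef]
    have hdz : dist t y' = |τ| := by rw [dist_base' y' t, ← hτdef]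
    rw [hdy, hdy1] at hlt1
    rw [hdy, hdy2] at hlt2
    rw [hdz, hdy] at hcon
    have hA := lt_of_lt_of_le hlt1 (norm_coe_le_abs (τ - u))
    have hB := lt_of_lt_of_le hlt2 (norm_coe_le_abs (τ - v))
    have hC := hcon
    have hbound : |τ - r| ≤ ℓ := by
      rw [abs_le]; constructor <;> linarith [hτm.1, hτm.2, hrm.1, hrm.2]
    rw [norm_coe_min hbound] at hA hB hC
    rcases hg with hg | hg <;>
      rcases min_cases (|τ - r|) (ℓ - |τ - r|) with ⟨e, e0⟩ | ⟨e, e0⟩ <;>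
        rw [e] at hA hB hC <;>
      rcases abs_cases (τ - r) with ⟨e1, e1'⟩ | ⟨e1, e1'⟩ <;> rw [e1] at hA hB hC e0 <;>
      rcases abs_cases (τ - u) with ⟨e2, e2'⟩ | ⟨e2, e2'⟩ <;> rw [e2] at hA <;>
      rcases abs_cases (τ - v) with ⟨e3, e3'⟩ | ⟨e3, e3'⟩ <;> rw [e3] at hB <;>
      rcases abs_cases τ with ⟨e4, e4'⟩ | ⟨e4, e4'⟩ <;> rw [e4] at hC <;>
      linarith [hτm.1, hτm.2, hrm.1, hrm.2]

lemma steal_eq {y₀ : AddCircle ℓ} (hy₀ : y₀ ∈ F) (hzF : z ∉ F) :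
    voronoi ℓ F y₀ ∩ {t | dist t z < dist t y₀}
      = voronoi ℓ F y₀ ∩ voronoi ℓ (insert z F) z := by
  ext t
  constructor
  · rintro ⟨hV, (hlt : dist t z < dist t y₀)⟩
    refine ⟨hV, fun y hy hne => ?_⟩
    rcases Finset.mem_insert.1 hy with rfl | hyF
    · exact absurd rfl hne
    by_cases hyy : y = y₀
    · subst hyy; exact hlt
    · exact lt_trans hlt (hV y hyF hyy)
  · rintro ⟨hV, hVz⟩
    exact ⟨hV, hVz y₀ (Finset.mem_insert_of_mem hy₀) (fun he => hzF (he ▸ hy₀))⟩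
end CaseB

lemma support_add_single (ζ : AddCircle ℓ →₀ ℕ) (z : AddCircle ℓ) :
    (ζ + Finsupp.single z 1).support = insert z ζ.support := by
  ext y
  simp only [Finsupp.mem_support_iff, Finsupp.add_apply, Finsupp.single_apply,
    Finset.mem_insert]
  rcases eq_or_ne y z with rfl | h
  · simp
  · simp [h, Ne.symm h]

end Helpers

/-- Adding a point preserves the interpolation identity: if `ζ` has atoms at `x-a`, `x`, `x+a`
and `g(x,ζ) = a²`, then `g(x, ζ + δ_z) = a²` for every `z`. -/
theorem g_add_point (ℓ : ℝ) [Fact (0 < ℓ)] (a : ℝ) (ha : 0 < a) (haℓ : a ≤ ℓ / 2)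
    (x : AddCircle ℓ) (ζ : AddCircle ℓ →₀ ℕ)
    (hx : x ∈ ζ.support) (hxl : x - (a : ℝ) ∈ ζ.support) (hxr : x + (a : ℝ) ∈ ζ.support)
    (hg : g ℓ a x ζ = a ^ 2) (z : AddCircle ℓ) :
    g ℓ a x (ζ + Finsupp.single z 1) = a ^ 2 := by
  classical
  have hp : (0:ℝ) < ℓ := (‹Fact (0 < ℓ)›).out
  by_cases hzF : z ∈ ζ.support
  · unfold g at hg ⊢
    rw [support_add_single, Finset.insert_eq_self.2 hzF]
    exact hg
  · unfold g at hg ⊢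
    rw [support_add_single]
    set F := ζ.support with hF
    rw [Finset.sum_insert hzF]
    rcases le_or_gt a (dist x z) with hfar | hnear
    · -- Case A
      have hwz : max (a - dist x z) 0 = 0 := max_eq_right (by linarith)
      rw [hwz, zero_mul, zero_add]
      rw [Finset.sum_congr rfl (fun y hyF => ?_)]
      · exact hg
      rcases le_or_gt a (dist x y) with hy | hy
      · have hwy : max (a - dist x y) 0 = 0 := max_eq_right (by linarith)
        rw [hwy, zero_mul, zero_mul]
      · rw [caseA_eq ha haℓ hxl hxr hfar hy]
    · -- Case B
      set cx := rp ℓ (x - z) with hcxdef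
      have hcxa : |cx| < a := by
        rw [dist_base' z x] at hnear; exact hnear
      have hcxm := rp_mem (x - z)
      have hcx0 : cx ≠ 0 := by
        intro h0
        apply hzF
        have : x - z = 0 := by
          rw [← coe_rp (x - z), ← hcxdef, h0]
          norm_cast
        rw [sub_eq_zero] at this
        rwa [← this]
      -- coordinates of the auxiliary atoms
      have hxma : 0 < cx → rp ℓ ((x - ((a:ℝ) : AddCircle ℓ)) - z) = cx - a := by
        intro hcxpos
        have he : (x - ((a:ℝ) : AddCircle ℓ)) - z = ((cx - a : ℝ) : AddCircle ℓ) := by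
          rw [coe_sub', hcxdef, coe_rp]
          abel
        rw [he, rp_coe ⟨by linarith, by linarith [hcxm.2, abs_lt.1 hcxa]⟩]
      have hxpa : cx < 0 → rp ℓ ((x + ((a:ℝ) : AddCircle ℓ)) - z) = cx + a := by
        intro hcxneg
        have he : (x + ((a:ℝ) : AddCircle ℓ)) - z = ((cx + a : ℝ) : AddCircle ℓ) := by
          rw [show ((cx + a : ℝ) : AddCircle ℓ)
            = ((cx : ℝ) : AddCircle ℓ) + ((a : ℝ) : AddCircle ℓ) from by rw [AddCircle.coe_add],
            hcxdef, coe_rp]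
          abel
        rw [he, rp_coe ⟨by linarith [abs_lt.1 hcxa], by linarith⟩]
      -- the two neighbours of z
      have hrne : ∀ y ∈ F, rp ℓ (y - z) ≠ 0 := by
        intro y hy h0
        apply hzF
        have : y - z = 0 := by
          rw [← coe_rp (y - z), h0]; norm_cast
        rw [sub_eq_zero] at this
        rwa [← this]
      have hMne : (F.filter (fun y => rp ℓ (y - z) < 0)).Nonempty := by
        rcases lt_or_gt_of_ne hcx0 with hneg | hpos
        · exact ⟨x, Finset.mem_filter.2 ⟨hx, by rw [← hcxdef]; exact hneg⟩⟩
        · exact ⟨x - ((a:ℝ) : AddCircle ℓ), Finset.mem_filter.2 ⟨hxl, by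
            rw [hxma hpos]; linarith [abs_lt.1 hcxa]⟩⟩
      have hPne : (F.filter (fun y => 0 < rp ℓ (y - z))).Nonempty := by
        rcases lt_or_gt_of_ne hcx0 with hneg | hpos
        · exact ⟨x + ((a:ℝ) : AddCircle ℓ), Finset.mem_filter.2 ⟨hxr, by
            rw [hxpa hneg]; linarith [abs_lt.1 hcxa]⟩⟩
        · exact ⟨x, Finset.mem_filter.2 ⟨hx, by rw [← hcxdef]; exact hpos⟩⟩
      obtain ⟨y₁, hy₁m, hy₁max⟩ := Finset.exists_max_image _ (fun y => rp ℓ (y - z)) hMne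
      obtain ⟨y₂, hy₂m, hy₂min⟩ := Finset.exists_min_image _ (fun y => rp ℓ (y - z)) hPne
      rw [Finset.mem_filter] at hy₁m hy₂m
      set u := rp ℓ (y₁ - z) with hudef
      set v := rp ℓ (y₂ - z) with hvdef
      have hu0 : u < 0 := hy₁m.2
      have hv0 : 0 < v := hy₂m.2
      -- order relations with cx
      have hCB : (0 < cx ∧ cx - a ≤ u ∧ v ≤ cx) ∨ (cx < 0 ∧ cx ≤ u ∧ v ≤ cx + a) := by
        rcases lt_or_gt_of_ne hcx0 with hneg | hpos
        · right
          refine ⟨hneg, ?_, ?_⟩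
          · have := hy₁max x (Finset.mem_filter.2 ⟨hx, by rw [← hcxdef]; exact hneg⟩)
            rw [← hcxdef] at this; exact this
          · have := hy₂min (x + ((a:ℝ) : AddCircle ℓ)) (Finset.mem_filter.2 ⟨hxr, by
              rw [hxpa hneg]; linarith [abs_lt.1 hcxa]⟩)
            rw [hxpa hneg] at this; exact this
        · left
          refine ⟨hpos, ?_, ?_⟩
          · have := hy₁max (x - ((a:ℝ) : AddCircle ℓ)) (Finset.mem_filter.2 ⟨hxl, by
              rw [hxma hpos]; linarith [abs_lt.1 hcxa]⟩)
            rw [hxma hpos] at this; exact this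
          · have := hy₂min x (Finset.mem_filter.2 ⟨hx, by rw [← hcxdef]; exact hpos⟩)
            rw [← hcxdef] at this; exact this
      have hua : -a < u := by
        rcases hCB with ⟨h1, h2, _⟩ | ⟨h1, h2, _⟩ <;> linarith
      have hva : v < a := by
        rcases hCB with ⟨h1, _, h3⟩ | ⟨h1, _, h3⟩ <;> linarith [abs_lt.1 hcxa]
      have hgap : ∀ y ∈ F, rp ℓ (y - z) ≤ u ∨ v ≤ rp ℓ (y - z) := by
        intro y hy
        rcases lt_trichotomy (rp ℓ (y - z)) 0 with h0 | h0 | h0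
        · exact Or.inl (hy₁max y (Finset.mem_filter.2 ⟨hy, h0⟩))
        · exact absurd h0 (hrne y hy)
        · exact Or.inr (hy₂min y (Finset.mem_filter.2 ⟨hy, h0⟩))
      have h1F := hy₁m.1
      have h2F := hy₂m.1
      have hy12 : y₁ ≠ y₂ := by
        intro he
        have huv : u = v := by rw [hudef, hvdef, he]
        linarith
      have hy1z : y₁ ≠ z := fun he => hzF (he ▸ h1F)
      have hy2z : y₂ ≠ z := fun he => hzF (he ▸ h2F)
      -- volumes
      have harc : ∀ α β : ℝ, -(ℓ/2) ≤ α → α ≤ β → β ≤ ℓ/2 →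
          (volume {t : AddCircle ℓ | rp ℓ (t - z) ∈ Set.Ioo α β}).toReal = β - α := by
        intro α β hα hαβ hβ
        rw [vol_arc z hα hβ, ENNReal.toReal_ofReal (by linarith)]
      have hb1 : -(ℓ/2) ≤ u/2 := by linarith
      have hb2 : v/2 ≤ ℓ/2 := by linarith
      have hvolz : (volume (voronoi ℓ (insert z F) z)).toReal = (v - u)/2 := by
        rw [cellz ha haℓ hzF h1F h2F hudef.symm hvdef.symm hu0 hv0 hua hva hgap,
          harc _ _ hb1 (by linarith) hb2]
        ring
      have hvolB1 : (volume (voronoi ℓ F y₁ ∩ voronoi ℓ (insert z F) z)).toReal = v/2 := by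
        rw [cellB1 ha haℓ hzF h1F h2F hudef.symm hvdef.symm hu0 hv0 hua hva hgap,
          harc _ _ hb1 (by linarith) (by linarith)]
        ring
      have hvolB2 : (volume (voronoi ℓ F y₂ ∩ voronoi ℓ (insert z F) z)).toReal = -u/2 := by
        rw [cellB2 ha haℓ hzF h1F h2F hudef.symm hvdef.symm hu0 hv0 hua hva hgap,
          harc _ _ (by linarith) (by linarith) hb2]
        ring
      -- splitting the old cells of y₁ and y₂
      have hsplit : ∀ y₀, y₀ ∈ F → (volume (voronoi ℓ F y₀)).toReal
          = (volume (voronoi ℓ (insert z F) y₀)).toReal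
            + (volume (voronoi ℓ F y₀ ∩ voronoi ℓ (insert z F) z)).toReal := by
        intro y₀ hy₀F
        have hy₀z : y₀ ≠ z := fun he => hzF (he ▸ hy₀F)
        have hv1 := vol_split (measurableSet_voronoi F y₀) hy₀z
        rw [← voronoi_insert F hy₀z, steal_eq hy₀F hzF] at hv1
        rw [hv1, ENNReal.toReal_add (measure_ne_top _ _) (measure_ne_top _ _)]
      -- weights
      have hwz' : max (a - dist x z) 0 = a - |cx| := by
        rw [dist_base' z x, ← hcxdef]
        exact max_eq_left (by linarith)
      have hdx1 : dist x y₁ = |cx - u| := by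
        rw [dist_rp' z x y₁, ← hcxdef, ← hudef]
        refine norm_coe_eq_abs ?_
        rw [abs_le]
        rcases hCB with ⟨h1, h2, h3⟩ | ⟨h1, h2, h3⟩ <;>
          constructor <;> linarith [abs_lt.1 hcxa]
      have hdx2 : dist x y₂ = |cx - v| := by
        rw [dist_rp' z x y₂, ← hcxdef, ← hvdef]
        refine norm_coe_eq_abs ?_
        rw [abs_le]
        rcases hCB with ⟨h1, h2, h3⟩ | ⟨h1, h2, h3⟩ <;>
          constructor <;> linarith [abs_lt.1 hcxa]
      have hw1 : max (a - dist x y₁) 0 = a - |cx - u| := by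
        rw [hdx1]
        refine max_eq_left ?_
        rcases hCB with ⟨h1, h2, h3⟩ | ⟨h1, h2, h3⟩ <;>
          rcases abs_cases (cx - u) with ⟨e, e'⟩ | ⟨e, e'⟩ <;>
          rw [e] <;> linarith [abs_lt.1 hcxa]
      have hw2 : max (a - dist x y₂) 0 = a - |cx - v| := by
        rw [hdx2]
        refine max_eq_left ?_
        rcases hCB with ⟨h1, h2, h3⟩ | ⟨h1, h2, h3⟩ <;>
          rcases abs_cases (cx - v) with ⟨e, e'⟩ | ⟨e, e'⟩ <;>
          rw [e] <;> linarith [abs_lt.1 hcxa]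
      -- sum over F of new terms equals old sum plus corrections
      have hpair : ({y₁, y₂} : Finset (AddCircle ℓ)) ⊆ F := by
        intro y hy
        rcases Finset.mem_insert.1 hy with rfl | hy
        · exact h1F
        · rw [Finset.mem_singleton.1 hy]; exact h2F
      have hdiff : ∑ y ∈ F, (max (a - dist x y) 0 * (volume (voronoi ℓ (insert z F) y)).toReal
            - max (a - dist x y) 0 * (volume (voronoi ℓ F y)).toReal)
          = ∑ y ∈ ({y₁, y₂} : Finset (AddCircle ℓ)),
              (max (a - dist x y) 0 * (volume (voronoi ℓ (insert z F) y)).toReal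
            - max (a - dist x y) 0 * (volume (voronoi ℓ F y)).toReal) := by
        refine (Finset.sum_subset hpair ?_).symm
        intro y hyF hyn
        have hne1 : y ≠ y₁ := fun he => hyn (by rw [he]; exact Finset.mem_insert_self _ _)
        have hne2 : y ≠ y₂ := fun he => hyn (by
          rw [he]; exact Finset.mem_insert_of_mem (Finset.mem_singleton_self _))
        rw [cellE4 ha haℓ hzF h1F h2F hudef.symm hvdef.symm hu0 hv0 hua hva hgap hyF hne1 hne2]
        ring
      rw [Finset.sum_pair hy12] at hdiff
      have hsum_sub : ∑ y ∈ F, (max (a - dist x y) 0 * (volume (voronoi ℓ (insert z F) y)).toReal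
            - max (a - dist x y) 0 * (volume (voronoi ℓ F y)).toReal)
          = (∑ y ∈ F, max (a - dist x y) 0 * (volume (voronoi ℓ (insert z F) y)).toReal)
            - ∑ y ∈ F, max (a - dist x y) 0 * (volume (voronoi ℓ F y)).toReal :=
        Finset.sum_sub_distrib _ _
      have hs1 := hsplit y₁ h1F
      have hs2 := hsplit y₂ h2F
      rw [hvolB1] at hs1
      rw [hvolB2] at hs2
      -- final computation
      rw [hvolz, hwz', hw1, hw2] at *
      rw [hsum_sub] at hdiff
      rw [hs1, hs2] at hdiff
      have hfin : ∑ y ∈ F, max (a - dist x y) 0 * (volume (voronoi ℓ (insert z F) y)).toReal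
          = a^2 - (a - |cx - u|) * (v/2) - (a - |cx - v|) * (-u/2) := by
        rw [hg] at hdiff
        linarith [hdiff]
      rw [hfin]
      rcases hCB with ⟨h1, h2, h3⟩ | ⟨h1, h2, h3⟩
      · rw [abs_of_pos h1, abs_of_nonneg (by linarith), abs_of_nonneg (by linarith)]
        ring
      · rw [abs_of_neg h1, abs_of_nonpos (by linarith), abs_of_nonpos (by linarith)]
        ring
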